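/- arXiv:2312.04061 — 4 statements merged into one kernel-verified Lean document; each statement's English description precedes it below -/
import Mathlib

section
/- Assume ε = −1, i.e. J is an invertible skew-symmetric n×n matrix over 𝔽_q (so n is even and G(J) is the symplectic group). For any two admissible pairs (X, Y) and (X', Y'), the matrices N(X, Y) and N(X', Y') are conjugate by an element of G(J) if and only if Y'·Y⁻¹ is a square in 𝔽_qˣ. Consequently, the elements N(X, Y), as (X, Y) ranges over all admissible pairs, fall into exactly two G(J)-conjugacy classes, and the class of N(X, Y) is determined by the square class of Y. (Lemma 3.3(ii)(iii), symplectic case.) -/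
open Matrix

variable {F : Type*} [Field F] {n : ℕ}

/-- `N(X,Y) = I - ᵅX·Y⁻¹·X = I + Y⁻¹·J⁻¹·Xᵀ·X`. -/
noncomputable def Nmat (J : Matrix (Fin n) (Fin n) F)
    (X : Matrix (Fin 1) (Fin n) F) (Y : F) : Matrix (Fin n) (Fin n) F :=
  1 + Y⁻¹ • (J⁻¹ * Xᵀ * X)

/-- `A` and `B` are conjugate by an element of the isometry group `G(J)`. -/
def IsGJConj (J A B : Matrix (Fin n) (Fin n) F) : Prop :=
  ∃ g : Matrix (Fin n) (Fin n) F, gᵀ * J * g = J ∧ g * A * g⁻¹ = B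

-- auxiliary lemmas

lemma oneByOne_mul (M : Matrix (Fin 1) (Fin 1) F) (w : Matrix (Fin 1) (Fin n) F) :
    M * w = M 0 0 • w := by
  ext i j
  have : i = 0 := Subsingleton.elim _ _
  subst this
  simp [Matrix.mul_apply, Fin.sum_univ_one]

lemma invJ_transpose (J : Matrix (Fin n) (Fin n) F) (hJ : IsUnit J) (hJt : Jᵀ = -J) :
    (J⁻¹)ᵀ = -J⁻¹ := by
  rw [Matrix.transpose_nonsing_inv, hJt]
  have h : (-J) * (-J⁻¹) = 1 := by
    rw [neg_mul_neg, Matrix.mul_nonsing_inv _ ((Matrix.isUnit_iff_isUnit_det J).mp hJ)]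
  exact Matrix.inv_eq_right_inv h

lemma pair_self_zero (J : Matrix (Fin n) (Fin n) F) (hJ : IsUnit J) (hJt : Jᵀ = -J)
    (h2 : (2 : F) ≠ 0) (X : Matrix (Fin 1) (Fin n) F) :
    X * J⁻¹ * Xᵀ = 0 := by
  set M := X * J⁻¹ * Xᵀ with hM
  have ht : Mᵀ = -M := by
    rw [hM, Matrix.transpose_mul, Matrix.transpose_mul, Matrix.transpose_transpose,
      invJ_transpose J hJ hJt]
    simp [Matrix.mul_assoc, Matrix.neg_mul, Matrix.mul_neg]
  have hsym : Mᵀ = M := by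
    ext i j
    have hi : i = 0 := Subsingleton.elim _ _
    have hj : j = 0 := Subsingleton.elim _ _
    subst hi; subst hj
    rfl
  have hMM : M = -M := by
    conv_lhs => rw [← hsym]
    exact ht
  have h0 : M + M = 0 := add_eq_zero_iff_eq_neg.mpr hMM
  have : (2 : F) • M = 0 := by rw [two_smul]; exact h0
  rcases smul_eq_zero.mp this with h | h
  · exact absurd h h2
  · exact h

/-- transvection -/
noncomputable def Tv (J : Matrix (Fin n) (Fin n) F) (w : Matrix (Fin 1) (Fin n) F) (μ : F) :
    Matrix (Fin n) (Fin n) F :=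
  1 + μ • (J⁻¹ * wᵀ * w)

lemma Tv_mem (J : Matrix (Fin n) (Fin n) F) (hJ : IsUnit J) (hJt : Jᵀ = -J)
    (h2 : (2 : F) ≠ 0) (w : Matrix (Fin 1) (Fin n) F) (μ : F) :
    (Tv J w μ)ᵀ * J * (Tv J w μ) = J := by
  have hdet : IsUnit J.det := (Matrix.isUnit_iff_isUnit_det J).mp hJ
  have hAt : (J⁻¹ * wᵀ * w)ᵀ = -(wᵀ * w * J⁻¹) := by
    rw [Matrix.transpose_mul, Matrix.transpose_mul, Matrix.transpose_transpose,
      invJ_transpose J hJ hJt]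
    simp [Matrix.mul_assoc, Matrix.neg_mul, Matrix.mul_neg]
  have hJA : J * (J⁻¹ * wᵀ * w) = wᵀ * w := by
    rw [← Matrix.mul_assoc, ← Matrix.mul_assoc, Matrix.mul_nonsing_inv _ hdet, Matrix.one_mul]
  have hAJ : (wᵀ * w * J⁻¹) * J = wᵀ * w := by
    rw [Matrix.mul_assoc, Matrix.nonsing_inv_mul _ hdet, Matrix.mul_one]
  have hAJA : (wᵀ * w * J⁻¹) * J * (J⁻¹ * wᵀ * w) = 0 := by
    rw [hAJ]
    have : wᵀ * w * (J⁻¹ * wᵀ * w) = wᵀ * (w * J⁻¹ * wᵀ) * w := by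
      simp [Matrix.mul_assoc]
    rw [this, pair_self_zero J hJ hJt h2 w]
    simp
  unfold Tv
  rw [Matrix.transpose_add, Matrix.transpose_one, Matrix.transpose_smul, hAt]
  rw [add_mul, add_mul, one_mul, smul_mul_assoc, mul_add, mul_add, mul_one, mul_one]
  rw [Matrix.mul_smul, hJA]
  rw [smul_mul_assoc, Matrix.mul_smul, smul_smul]
  rw [neg_mul, neg_mul, hAJA, hAJ]
  simp [smul_smul]

lemma Tv_row (J : Matrix (Fin n) (Fin n) F) (X w : Matrix (Fin 1) (Fin n) F) (μ : F) :
    X * Tv J w μ = X + (μ * (X * J⁻¹ * wᵀ) 0 0) • w := by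
  unfold Tv
  rw [Matrix.mul_add, Matrix.mul_one, Matrix.mul_smul]
  have : X * (J⁻¹ * wᵀ * w) = (X * J⁻¹ * wᵀ) * w := by
    simp [Matrix.mul_assoc]
  rw [this, oneByOne_mul, smul_smul]

lemma step_lemma (J : Matrix (Fin n) (Fin n) F) (hJ : IsUnit J) (hJt : Jᵀ = -J)
    (h2 : (2 : F) ≠ 0) (X z : Matrix (Fin 1) (Fin n) F)
    (hb : (X * J⁻¹ * zᵀ) 0 0 ≠ 0) :
    ∃ h : Matrix (Fin n) (Fin n) F, hᵀ * J * h = J ∧ X * h = z := by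
  set b := (X * J⁻¹ * zᵀ) 0 0 with hbdef
  refine ⟨Tv J (z - X) b⁻¹, Tv_mem J hJ hJt h2 _ _, ?_⟩
  rw [Tv_row]
  have hwt : X * J⁻¹ * (z - X)ᵀ = X * J⁻¹ * zᵀ := by
    rw [Matrix.transpose_sub, Matrix.mul_sub, pair_self_zero J hJ hJt h2 X, sub_zero]
  rw [hwt, ← hbdef, inv_mul_cancel₀ hb, one_smul]
  abel

lemma exists_pair_ne_zero (J : Matrix (Fin n) (Fin n) F) (hJ : IsUnit J)
    (X : Matrix (Fin 1) (Fin n) F) (hX : X ≠ 0) :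
    ∃ a : Matrix (Fin 1) (Fin n) F, (X * J⁻¹ * aᵀ) 0 0 ≠ 0 := by
  have hXJ : X * J⁻¹ ≠ 0 := by
    intro h
    apply hX
    have := congrArg (· * J) h
    simpa [Matrix.mul_assoc, Matrix.nonsing_inv_mul _ ((Matrix.isUnit_iff_isUnit_det J).mp hJ)]
      using this
  obtain ⟨i, k, hik⟩ : ∃ i k, (X * J⁻¹) i k ≠ 0 := by
    by_contra h
    push_neg at h
    exact hXJ (by ext i k; simpa using h i k)
  have hi : i = 0 := Subsingleton.elim _ _
  subst hi
  refine ⟨Matrix.of fun _ j => if j = k then 1 else 0, ?_⟩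
  rw [Matrix.mul_apply]
  simpa [Matrix.transpose_apply, mul_ite] using hik

lemma skew_pair (J : Matrix (Fin n) (Fin n) F) (hJ : IsUnit J) (hJt : Jᵀ = -J)
    (u v : Matrix (Fin 1) (Fin n) F) :
    (u * J⁻¹ * vᵀ) 0 0 = -((v * J⁻¹ * uᵀ) 0 0) := by
  have h : (u * J⁻¹ * vᵀ)ᵀ = -(v * J⁻¹ * uᵀ) := by
    rw [Matrix.transpose_mul, Matrix.transpose_mul, Matrix.transpose_transpose,
      invJ_transpose J hJ hJt]
    simp [Matrix.mul_assoc, Matrix.neg_mul, Matrix.mul_neg]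
  calc (u * J⁻¹ * vᵀ) 0 0 = (u * J⁻¹ * vᵀ)ᵀ 0 0 := rfl
    _ = -((v * J⁻¹ * uᵀ) 0 0) := by rw [h]; rfl

lemma transitivity (J : Matrix (Fin n) (Fin n) F) (hJ : IsUnit J) (hJt : Jᵀ = -J)
    (h2 : (2 : F) ≠ 0) (X X2 : Matrix (Fin 1) (Fin n) F) (hX : X ≠ 0) (hX2 : X2 ≠ 0) :
    ∃ h : Matrix (Fin n) (Fin n) F, hᵀ * J * h = J ∧ X * h = X2 := by
  by_cases hb : (X * J⁻¹ * X2ᵀ) 0 0 ≠ 0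
  · exact step_lemma J hJ hJt h2 X X2 hb
  · push_neg at hb
    obtain ⟨a, ha⟩ := exists_pair_ne_zero J hJ X hX
    obtain ⟨c, hc⟩ := exists_pair_ne_zero J hJ X2 hX2
    -- find z with (X J⁻¹ zᵀ)00 ≠ 0 and (X2 J⁻¹ zᵀ)00 ≠ 0
    obtain ⟨z, hz1, hz2⟩ : ∃ z : Matrix (Fin 1) (Fin n) F,
        (X * J⁻¹ * zᵀ) 0 0 ≠ 0 ∧ (X2 * J⁻¹ * zᵀ) 0 0 ≠ 0 := by
      by_cases h1 : (X * J⁻¹ * cᵀ) 0 0 ≠ 0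
      · exact ⟨c, h1, hc⟩
      · by_cases h3 : (X2 * J⁻¹ * aᵀ) 0 0 ≠ 0
        · exact ⟨a, ha, h3⟩
        · push_neg at h1 h3
          refine ⟨a + c, ?_, ?_⟩
          · rw [Matrix.transpose_add, Matrix.mul_add, Matrix.add_apply, h1, add_zero]
            exact ha
          · rw [Matrix.transpose_add, Matrix.mul_add, Matrix.add_apply, h3, zero_add]
            exact hc
    obtain ⟨h₁, hm₁, hr₁⟩ := step_lemma J hJ hJt h2 X z hz1
    have hz2' : (z * J⁻¹ * X2ᵀ) 0 0 ≠ 0 := by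
      rw [skew_pair J hJ hJt z X2]
      exact neg_ne_zero.mpr hz2
    obtain ⟨h₂, hm₂, hr₂⟩ := step_lemma J hJ hJt h2 z X2 hz2'
    refine ⟨h₁ * h₂, ?_, ?_⟩
    · rw [Matrix.transpose_mul]
      calc h₂ᵀ * h₁ᵀ * J * (h₁ * h₂) = h₂ᵀ * (h₁ᵀ * J * h₁) * h₂ := by noncomm_ring
        _ = J := by rw [hm₁]; exact hm₂
    · rw [← Matrix.mul_assoc, hr₁, hr₂]

lemma mem_isUnit (J g : Matrix (Fin n) (Fin n) F) (hJ : IsUnit J) (hg : gᵀ * J * g = J) :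
    IsUnit g := by
  have hdet : IsUnit J.det := (Matrix.isUnit_iff_isUnit_det J).mp hJ
  rw [Matrix.isUnit_iff_isUnit_det]
  have hth := congrArg Matrix.det hg
  rw [Matrix.det_mul, Matrix.det_mul, Matrix.det_transpose] at hth
  rw [isUnit_iff_ne_zero]
  intro h
  rw [h, mul_zero] at hth
  exact isUnit_iff_ne_zero.mp hdet hth.symm

lemma conj_formula (J g : Matrix (Fin n) (Fin n) F) (hJ : IsUnit J) (hg : gᵀ * J * g = J)
    (X : Matrix (Fin 1) (Fin n) F) (Y : F) :
    g * Nmat J X Y * g⁻¹ = Nmat J (X * g⁻¹) Y := by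
  have hgu : IsUnit g := mem_isUnit J g hJ hg
  have hgd : IsUnit g.det := (Matrix.isUnit_iff_isUnit_det g).mp hgu
  have hgtd : IsUnit gᵀ.det := by rwa [Matrix.det_transpose]
  -- g * J⁻¹ * gᵀ = J⁻¹
  have hinv : g⁻¹ * J⁻¹ * (gᵀ)⁻¹ = J⁻¹ := by
    have := congrArg (·⁻¹) hg
    simpa [Matrix.mul_inv_rev, Matrix.mul_assoc] using this
  have hkey : g * J⁻¹ * gᵀ = J⁻¹ := by
    have := congrArg (fun M => g * M * gᵀ) hinv
    rw [← this]
    calc g * (g⁻¹ * J⁻¹ * (gᵀ)⁻¹) * gᵀ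
        = (g * g⁻¹) * J⁻¹ * ((gᵀ)⁻¹ * gᵀ) := by noncomm_ring
      _ = J⁻¹ := by rw [Matrix.mul_nonsing_inv _ hgd, Matrix.nonsing_inv_mul _ hgtd]; simp
  have hXt : (X * g⁻¹)ᵀ = (gᵀ)⁻¹ * Xᵀ := by
    rw [Matrix.transpose_mul, Matrix.transpose_nonsing_inv]
  unfold Nmat
  rw [mul_add, add_mul, mul_one, Matrix.mul_smul, smul_mul_assoc]
  rw [Matrix.mul_nonsing_inv _ hgd, hXt]
  have hinner : g * (J⁻¹ * Xᵀ * X) * g⁻¹ = J⁻¹ * ((gᵀ)⁻¹ * Xᵀ) * (X * g⁻¹) := by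
    calc g * (J⁻¹ * Xᵀ * X) * g⁻¹
        = (g * J⁻¹ * gᵀ) * ((gᵀ)⁻¹ * Xᵀ) * (X * g⁻¹) := by
          have h1 : (g * J⁻¹ * gᵀ) * ((gᵀ)⁻¹ * Xᵀ) = g * J⁻¹ * Xᵀ := by
            rw [Matrix.mul_assoc (g * J⁻¹), ← Matrix.mul_assoc gᵀ,
              Matrix.mul_nonsing_inv _ hgtd, Matrix.one_mul]
          rw [h1]
          simp [Matrix.mul_assoc]
      _ = J⁻¹ * ((gᵀ)⁻¹ * Xᵀ) * (X * g⁻¹) := by rw [hkey]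
  rw [hinner]


/-- Lemma 3.3(ii)(iii), symplectic case: `J` is an invertible skew-symmetric matrix over
`𝔽_q` (`q` odd).  For admissible pairs (here: `X ≠ 0`, `Y ≠ 0`; the admissibility equation
is automatic), `N(X,Y)` and `N(X',Y')` are `G(J)`-conjugate iff `Y'·Y⁻¹` is a square.
Consequently, the elements `N(X,Y)` fall into exactly two `G(J)`-conjugacy classes, the
class being determined by the square class of `Y`. -/
theorem N_conj_iff_square_symplectic
    (F : Type*) [Field F] [Fintype F] (hF : ringChar F ≠ 2)
    (n : ℕ) (hn : 0 < n)
    (J : Matrix (Fin n) (Fin n) F) (hJ : IsUnit J) (hJt : Jᵀ = -J) :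
    (∀ (X X' : Matrix (Fin 1) (Fin n) F) (Y Y' : F),
      X ≠ 0 → Y ≠ 0 → X' ≠ 0 → Y' ≠ 0 →
        (IsGJConj J (Nmat J X Y) (Nmat J X' Y') ↔ IsSquare (Y' * Y⁻¹))) ∧
    ∃ (X₁ X₂ : Matrix (Fin 1) (Fin n) F) (Y₁ Y₂ : F),
      X₁ ≠ 0 ∧ Y₁ ≠ 0 ∧ X₂ ≠ 0 ∧ Y₂ ≠ 0 ∧
      ¬ IsGJConj J (Nmat J X₁ Y₁) (Nmat J X₂ Y₂) ∧
      ∀ (X : Matrix (Fin 1) (Fin n) F) (Y : F), X ≠ 0 → Y ≠ 0 →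
        IsGJConj J (Nmat J X Y) (Nmat J X₁ Y₁) ∨
        IsGJConj J (Nmat J X Y) (Nmat J X₂ Y₂) := by
  have h2 : (2 : F) ≠ 0 := Ring.two_ne_zero hF
  have hdet : IsUnit J.det := (Matrix.isUnit_iff_isUnit_det J).mp hJ
  -- main iff
  have main : ∀ (X X' : Matrix (Fin 1) (Fin n) F) (Y Y' : F),
      X ≠ 0 → Y ≠ 0 → X' ≠ 0 → Y' ≠ 0 →
        (IsGJConj J (Nmat J X Y) (Nmat J X' Y') ↔ IsSquare (Y' * Y⁻¹)) := by
    intro X X' Y Y' hX hY hX' hY'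
    constructor
    · rintro ⟨g, hg, hconj⟩
      have hform := conj_formula J g hJ hg X Y
      rw [hconj] at hform
      -- Nmat J X' Y' = Nmat J (X g⁻¹) Y
      set Z := X * g⁻¹ with hZ
      have heq : Y'⁻¹ • (J⁻¹ * X'ᵀ * X') = Y⁻¹ • (J⁻¹ * Zᵀ * Z) := by
        have := hform
        unfold Nmat at this
        exact (add_left_cancel this)
      have heq2 : Y'⁻¹ • (X'ᵀ * X') = Y⁻¹ • (Zᵀ * Z) := by
        have := congrArg (fun M => J * M) heq
        simp only [Matrix.mul_smul] at this
        simp only [← Matrix.mul_assoc] at this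
        rwa [Matrix.mul_nonsing_inv _ hdet, Matrix.one_mul, Matrix.one_mul] at this
      obtain ⟨r, i, hri⟩ : ∃ r i, X' r i ≠ 0 := by
        by_contra h
        push_neg at h
        exact hX' (by ext r i; simpa using h r i)
      have hr0 : r = 0 := Subsingleton.elim _ _
      subst hr0
      have hentry := congrFun (congrFun heq2 i) i
      simp only [Matrix.smul_apply, Matrix.mul_apply, Fin.sum_univ_one,
        Matrix.transpose_apply, smul_eq_mul] at hentry
      -- hentry : Y'⁻¹ * (X' 0 i * X' 0 i) = Y⁻¹ * (Z 0 i * Z 0 i)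
      have hZi : Z 0 i ≠ 0 := by
        intro h0
        rw [h0] at hentry
        simp only [mul_zero, zero_mul] at hentry
        exact (mul_ne_zero (inv_ne_zero hY') (mul_ne_zero hri hri)) (by simpa using hentry)
      refine ⟨X' 0 i / Z 0 i, ?_⟩
      field_simp
      field_simp at hentry
      linear_combination (-1 : F) * hentry
    · rintro ⟨s, hs⟩
      have hs0 : s ≠ 0 := by
        intro h
        rw [h, mul_zero] at hs
        exact (mul_ne_zero hY' (inv_ne_zero hY)) hs
      -- Nmat J X' Y' = Nmat J (s⁻¹ • X') Y
      have hrescale : Nmat J X' Y' = Nmat J (s⁻¹ • X') Y := by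
        unfold Nmat
        simp only [Matrix.transpose_smul, Matrix.mul_smul, Matrix.smul_mul, smul_smul]
        congr 1
        congr 1
        have hs' : Y' = s * s * Y := by
          rw [← hs]
          field_simp
        rw [hs', mul_inv, mul_inv, mul_assoc]
        ring
      set X'' := s⁻¹ • X' with hX''def
      have hX'' : X'' ≠ 0 := by
        intro h
        apply hX'
        have : s • X'' = X' := by rw [hX''def, smul_smul, mul_inv_cancel₀ hs0, one_smul]
        rw [← this, h, smul_zero]
      obtain ⟨h, hm, hr⟩ := transitivity J hJ hJt h2 X X'' hX hX''
      have hhu : IsUnit h := mem_isUnit J h hJ hm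
      have hhd : IsUnit h.det := (Matrix.isUnit_iff_isUnit_det h).mp hhu
      refine ⟨h⁻¹, ?_, ?_⟩
      · -- (h⁻¹)ᵀ J h⁻¹ = J
        have hht : IsUnit hᵀ.det := by rwa [Matrix.det_transpose]
        calc (h⁻¹)ᵀ * J * h⁻¹ = (hᵀ)⁻¹ * (hᵀ * J * h) * h⁻¹ := by
              rw [hm, Matrix.transpose_nonsing_inv]
          _ = J := by
              rw [← Matrix.mul_assoc, ← Matrix.mul_assoc]
              rw [Matrix.nonsing_inv_mul _ hht, Matrix.one_mul, Matrix.mul_assoc,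
                Matrix.mul_nonsing_inv _ hhd, Matrix.mul_one]
      · have hmem : (h⁻¹)ᵀ * J * h⁻¹ = J := by
          have hht : IsUnit hᵀ.det := by rwa [Matrix.det_transpose]
          calc (h⁻¹)ᵀ * J * h⁻¹ = (hᵀ)⁻¹ * (hᵀ * J * h) * h⁻¹ := by
                rw [hm, Matrix.transpose_nonsing_inv]
            _ = J := by
                rw [← Matrix.mul_assoc, ← Matrix.mul_assoc]
                rw [Matrix.nonsing_inv_mul _ hht, Matrix.one_mul, Matrix.mul_assoc,
                  Matrix.mul_nonsing_inv _ hhd, Matrix.mul_one]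
        rw [conj_formula J h⁻¹ hJ hmem X Y, Matrix.nonsing_inv_nonsing_inv _ hhd, hr,
          hrescale]
  refine ⟨main, ?_⟩
  classical
  obtain ⟨u, hu⟩ := FiniteField.exists_nonsquare (F := F) hF
  have hu0 : u ≠ 0 := by
    intro h
    exact hu ⟨0, by rw [h, mul_zero]⟩
  set X0 : Matrix (Fin 1) (Fin n) F := Matrix.of fun _ _ => 1 with hX0def
  have hX0 : X0 ≠ 0 := by
    intro h
    have := congrFun (congrFun h 0) ⟨0, hn⟩
    simp [hX0def] at this
  refine ⟨X0, X0, 1, u, hX0, one_ne_zero, hX0, hu0, ?_, ?_⟩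
  · rw [main X0 X0 1 u hX0 one_ne_zero hX0 hu0]
    simpa using hu
  · intro X Y hX hY
    by_cases hsq : IsSquare Y
    · left
      rw [main X X0 Y 1 hX hY hX0 one_ne_zero]
      obtain ⟨r, hr⟩ := hsq
      have hr0 : r ≠ 0 := by rintro rfl; exact hY (by simpa using hr)
      exact ⟨r⁻¹, by rw [one_mul, hr]; field_simp⟩
    · right
      rw [main X X0 Y u hX hY hX0 hu0]
      -- u * Y⁻¹ is a square since both u and Y are nonsquares
      have hq : quadraticChar F (u * Y⁻¹) = 1 := by
        have h1 : quadraticChar F u = -1 := quadraticChar_neg_one_iff_not_isSquare.mpr hu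
        have h2' : quadraticChar F Y = -1 := quadraticChar_neg_one_iff_not_isSquare.mpr hsq
        have hmul : quadraticChar F (u * Y⁻¹) * quadraticChar F Y = quadraticChar F u := by
          rw [← _root_.map_mul]
          congr 1
          field_simp
        rw [h1, h2'] at hmul
        linarith [hmul]
      exact (quadraticChar_one_iff_isSquare (mul_ne_zero hu0 (inv_ne_zero hY))).mp hq
end

section
/- Assume ε = 1, i.e. J is an invertible symmetric n×n matrix over 𝔽_q (so G(J) is an orthogonal group). For any two admissible pairs (X, Y) and (X', Y') (so that X·(−J⁻¹·Xᵀ) = 2Y and X'·(−J⁻¹·X'ᵀ) = 2Y'), the matrices N(X, Y) and N(X', Y') are conjugate by an element of G(J) if and only if Y'·Y⁻¹ is a square in 𝔽_qˣ; in particular, the G(J)-conjugacy class of N(X, Y) depends only on, and is determined by, the square class of Y. (Lemma 3.3(ii)(iii), orthogonal case.) -/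
open Matrix

variable {F : Type*} [Field F] {n : ℕ}

namespace NAux

noncomputable def bil (J : Matrix (Fin n) (Fin n) F) (Z W : Matrix (Fin 1) (Fin n) F) : F :=
  (Z * J⁻¹ * Wᵀ) 0 0

lemma one_by_one (M : Matrix (Fin 1) (Fin 1) F) :
    M = M 0 0 • (1 : Matrix (Fin 1) (Fin 1) F) := by
  ext i j; fin_cases i <;> fin_cases j <;> simp

lemma row_eq (J : Matrix (Fin n) (Fin n) F) (Z W : Matrix (Fin 1) (Fin n) F) :
    Z * J⁻¹ * Wᵀ = bil J Z W • (1 : Matrix (Fin 1) (Fin 1) F) := one_by_one _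

lemma binv_symm {J : Matrix (Fin n) (Fin n) F} (hJt : Jᵀ = J) : (J⁻¹)ᵀ = J⁻¹ := by
  rw [Matrix.transpose_nonsing_inv, hJt]

lemma bil_comm {J : Matrix (Fin n) (Fin n) F} (hJt : Jᵀ = J)
    (Z W : Matrix (Fin 1) (Fin n) F) : bil J Z W = bil J W Z := by
  have h : (Z * J⁻¹ * Wᵀ)ᵀ = W * J⁻¹ * Zᵀ := by
    simp [Matrix.transpose_mul, binv_symm hJt, Matrix.mul_assoc]
  have h2 : (Z * J⁻¹ * Wᵀ) 0 0 = (Z * J⁻¹ * Wᵀ)ᵀ 0 0 := rfl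
  rw [bil, h2, h]
  rfl

lemma bil_smul_left (J : Matrix (Fin n) (Fin n) F) (Z W : Matrix (Fin 1) (Fin n) F) (t : F) :
    bil J (t • Z) W = t * bil J Z W := by
  simp [bil, Matrix.smul_mul]

lemma bil_smul_right (J : Matrix (Fin n) (Fin n) F) (Z W : Matrix (Fin 1) (Fin n) F) (t : F) :
    bil J Z (t • W) = t * bil J Z W := by
  simp [bil, Matrix.transpose_smul, Matrix.mul_smul]

lemma bil_add_left (J : Matrix (Fin n) (Fin n) F) (Z₁ Z₂ W : Matrix (Fin 1) (Fin n) F) :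
    bil J (Z₁ + Z₂) W = bil J Z₁ W + bil J Z₂ W := by
  simp [bil, Matrix.add_mul]

lemma bil_add_right (J : Matrix (Fin n) (Fin n) F) (Z W₁ W₂ : Matrix (Fin 1) (Fin n) F) :
    bil J Z (W₁ + W₂) = bil J Z W₁ + bil J Z W₂ := by
  simp [bil, Matrix.mul_add, Matrix.transpose_add]

lemma Nmat_transpose {J : Matrix (Fin n) (Fin n) F} (hJt : Jᵀ = J)
    (Z : Matrix (Fin 1) (Fin n) F) (Yz : F) :
    (Nmat J Z Yz)ᵀ = 1 + Yz⁻¹ • (Zᵀ * (Z * J⁻¹)) := by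
  simp [Nmat, Matrix.transpose_add, Matrix.transpose_smul, Matrix.transpose_mul,
    binv_symm hJt, Matrix.mul_assoc]

lemma Nmat_isometry {J : Matrix (Fin n) (Fin n) F} (hJ : IsUnit J) (hJt : Jᵀ = J)
    (Z : Matrix (Fin 1) (Fin n) F) (Yz : F) (hYz : Yz ≠ 0)
    (hb : bil J Z Z = -(2 * Yz)) :
    (Nmat J Z Yz)ᵀ * J * Nmat J Z Yz = J := by
  have hd : IsUnit J.det := (Matrix.isUnit_iff_isUnit_det J).mp hJ
  have hBJ : J⁻¹ * J = 1 := Matrix.nonsing_inv_mul J hd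
  have hJB : J * J⁻¹ = 1 := Matrix.mul_nonsing_inv J hd
  rw [Nmat_transpose hJt, Nmat]
  simp only [Matrix.add_mul, Matrix.mul_add, Matrix.one_mul, Matrix.mul_one,
    Matrix.smul_mul, Matrix.mul_smul, smul_smul, smul_add]
  have h1 : Zᵀ * (Z * J⁻¹) * J = Zᵀ * Z := by
    rw [Matrix.mul_assoc Zᵀ, Matrix.mul_assoc Z, hBJ, Matrix.mul_one]
  have h2 : J * (J⁻¹ * Zᵀ * Z) = Zᵀ * Z := by
    rw [← Matrix.mul_assoc, ← Matrix.mul_assoc, hJB, Matrix.one_mul]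
  have h3 : Zᵀ * Z * (J⁻¹ * Zᵀ * Z) = bil J Z Z • (Zᵀ * Z) := by
    calc Zᵀ * Z * (J⁻¹ * Zᵀ * Z) = Zᵀ * (Z * J⁻¹ * Zᵀ) * Z := by
          simp only [Matrix.mul_assoc]
      _ = bil J Z Z • (Zᵀ * Z) := by
        rw [row_eq]
        simp only [Matrix.mul_smul, Matrix.smul_mul, Matrix.mul_one]
  rw [h1, h2, h3, hb, smul_smul]
  have hco : Yz⁻¹ * Yz⁻¹ * -(2 * Yz) = -(Yz⁻¹ + Yz⁻¹) := by field_simp; ring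
  rw [hco]
  module


lemma mid (J : Matrix (Fin n) (Fin n) F) (Z W U V : Matrix (Fin 1) (Fin n) F) :
    (J⁻¹ * Zᵀ * W) * (J⁻¹ * Uᵀ * V) = bil J W U • (J⁻¹ * Zᵀ * V) := by
  have h := row_eq J W U
  calc J⁻¹ * Zᵀ * W * (J⁻¹ * Uᵀ * V)
      = J⁻¹ * Zᵀ * (W * J⁻¹ * Uᵀ) * V := by simp only [Matrix.mul_assoc]
    _ = bil J W U • (J⁻¹ * Zᵀ * V) := by
        rw [h]
        simp only [Matrix.mul_smul, Matrix.smul_mul, Matrix.mul_one, Matrix.mul_assoc]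

lemma Nmat_sq {J : Matrix (Fin n) (Fin n) F}
    (Z : Matrix (Fin 1) (Fin n) F) (Yz : F) (hYz : Yz ≠ 0)
    (hb : bil J Z Z = -(2 * Yz)) :
    Nmat J Z Yz * Nmat J Z Yz = 1 := by
  rw [Nmat]
  simp only [Matrix.add_mul, Matrix.mul_add, Matrix.one_mul, Matrix.mul_one,
    Matrix.smul_mul, Matrix.mul_smul, smul_smul, smul_add]
  rw [mid, hb, smul_smul]
  have hco : Yz⁻¹ * Yz⁻¹ * -(2 * Yz) = -(Yz⁻¹ + Yz⁻¹) := by field_simp; ring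
  rw [hco]
  module

lemma conj_Nmat {J : Matrix (Fin n) (Fin n) F} (hJ : IsUnit J) (hJt : Jᵀ = J)
    (g : Matrix (Fin n) (Fin n) F) (hgr : g * (J⁻¹ * gᵀ * J) = 1)
    (Z : Matrix (Fin 1) (Fin n) F) (Yz : F) :
    g * Nmat J Z Yz * (J⁻¹ * gᵀ * J) = Nmat J (Z * J⁻¹ * gᵀ * J) Yz := by
  have hd : IsUnit J.det := (Matrix.isUnit_iff_isUnit_det J).mp hJ
  have hBJ : J⁻¹ * J = 1 := Matrix.nonsing_inv_mul J hd
  have hW : (Z * J⁻¹ * gᵀ * J)ᵀ = J * g * J⁻¹ * Zᵀ := by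
    simp [Matrix.transpose_mul, binv_symm hJt, hJt, Matrix.mul_assoc]
  rw [Nmat, Nmat, hW]
  simp only [Matrix.add_mul, Matrix.mul_add, Matrix.one_mul, Matrix.mul_one,
    Matrix.smul_mul, Matrix.mul_smul, hgr]
  congr 1
  congr 1
  calc g * (J⁻¹ * Zᵀ * Z) * (J⁻¹ * gᵀ * J)
      = g * J⁻¹ * Zᵀ * (Z * J⁻¹ * gᵀ * J) := by simp only [Matrix.mul_assoc]
    _ = J⁻¹ * (J * g * J⁻¹ * Zᵀ) * (Z * J⁻¹ * gᵀ * J) := by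
        rw [show J⁻¹ * (J * g * J⁻¹ * Zᵀ) = (J⁻¹ * J) * g * J⁻¹ * Zᵀ by
          simp only [Matrix.mul_assoc], hBJ, Matrix.one_mul]

lemma row_transform {J : Matrix (Fin n) (Fin n) F} (hJ : IsUnit J) (hJt : Jᵀ = J)
    (Z X : Matrix (Fin 1) (Fin n) F) (Yz : F) :
    X * J⁻¹ * (Nmat J Z Yz)ᵀ * J = X + (Yz⁻¹ * bil J X Z) • Z := by
  have hd : IsUnit J.det := (Matrix.isUnit_iff_isUnit_det J).mp hJ
  have hBJ : J⁻¹ * J = 1 := Matrix.nonsing_inv_mul J hd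
  rw [Nmat_transpose hJt]
  simp only [Matrix.mul_add, Matrix.add_mul, Matrix.mul_one, Matrix.mul_smul,
    Matrix.smul_mul]
  have h1 : X * J⁻¹ * J = X := by
    rw [Matrix.mul_assoc, hBJ, Matrix.mul_one]
  have h2 : X * J⁻¹ * (Zᵀ * (Z * J⁻¹)) * J = bil J X Z • Z := by
    calc X * J⁻¹ * (Zᵀ * (Z * J⁻¹)) * J
        = (X * J⁻¹ * Zᵀ) * (Z * (J⁻¹ * J)) := by simp only [Matrix.mul_assoc]
      _ = bil J X Z • Z := by
          rw [hBJ, Matrix.mul_one, row_eq, Matrix.smul_mul, Matrix.one_mul]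
  rw [h1, h2, smul_smul]

lemma Nmat_smul {J : Matrix (Fin n) (Fin n) F}
    (Z : Matrix (Fin 1) (Fin n) F) (t Yz : F) (ht : t ≠ 0) (hYz : Yz ≠ 0) :
    Nmat J (t • Z) (t ^ 2 * Yz) = Nmat J Z Yz := by
  rw [Nmat, Nmat]
  congr 1
  simp only [Matrix.transpose_smul, Matrix.mul_smul, Matrix.smul_mul, smul_smul]
  congr 1
  rw [mul_inv, pow_two, mul_inv]
  field_simp

lemma norm_transform {J : Matrix (Fin n) (Fin n) F} (hJ : IsUnit J) (hJt : Jᵀ = J)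
    (g : Matrix (Fin n) (Fin n) F) (hg : gᵀ * J * g = J)
    (X : Matrix (Fin 1) (Fin n) F) :
    (g * (J⁻¹ * Xᵀ))ᵀ * J * (g * (J⁻¹ * Xᵀ)) = bil J X X • 1 := by
  have hd : IsUnit J.det := (Matrix.isUnit_iff_isUnit_det J).mp hJ
  have hJB : J * J⁻¹ = 1 := Matrix.mul_nonsing_inv J hd
  have ht : (g * (J⁻¹ * Xᵀ))ᵀ = X * J⁻¹ * gᵀ := by
    simp [Matrix.transpose_mul, binv_symm hJt, Matrix.mul_assoc]
  rw [ht]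
  calc X * J⁻¹ * gᵀ * J * (g * (J⁻¹ * Xᵀ))
      = X * J⁻¹ * (gᵀ * J * g) * (J⁻¹ * Xᵀ) := by simp only [Matrix.mul_assoc]
    _ = X * (J⁻¹ * J) * (J⁻¹ * Xᵀ) := by rw [hg]; simp only [Matrix.mul_assoc]
    _ = bil J X X • 1 := by
        rw [Matrix.nonsing_inv_mul J hd, Matrix.mul_one, ← Matrix.mul_assoc, row_eq]

end NAux

namespace NAux

lemma conj_of_reflection {J : Matrix (Fin n) (Fin n) F} (hJ : IsUnit J) (hJt : Jᵀ = J)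
    (h2 : (2 : F) ≠ 0)
    (X X' Z : Matrix (Fin 1) (Fin n) F) (Y Y' t : F) (ht : t ≠ 0) (hY' : Y' ≠ 0)
    (hbZ : bil J Z Z ≠ 0) (hYY : Y = t ^ 2 * Y')
    (hW : X + ((-(bil J Z Z) / 2)⁻¹ * bil J X Z) • Z = t • X') :
    IsGJConj J (Nmat J X Y) (Nmat J X' Y') := by
  set Yz : F := -(bil J Z Z) / 2 with hYzdef
  have hYz : Yz ≠ 0 := div_ne_zero (neg_ne_zero.mpr hbZ) h2
  have hbb : bil J Z Z = -(2 * Yz) := by rw [hYzdef]; field_simp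
  set g := Nmat J Z Yz with hgdef
  have hiso : gᵀ * J * g = J := Nmat_isometry hJ hJt Z Yz hYz hbb
  have hd : IsUnit J.det := (Matrix.isUnit_iff_isUnit_det J).mp hJ
  have hBJ : J⁻¹ * J = 1 := Matrix.nonsing_inv_mul J hd
  have hleft : (J⁻¹ * gᵀ * J) * g = 1 := by
    calc (J⁻¹ * gᵀ * J) * g = J⁻¹ * (gᵀ * J * g) := by simp only [Matrix.mul_assoc]
      _ = 1 := by rw [hiso, hBJ]
  have hdetg : IsUnit g.det := Matrix.isUnit_det_of_left_inverse hleft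
  have hginv : g⁻¹ = J⁻¹ * gᵀ * J := Matrix.inv_eq_left_inv hleft
  have hgr : g * (J⁻¹ * gᵀ * J) = 1 := by
    rw [← hginv]; exact Matrix.mul_nonsing_inv g hdetg
  refine ⟨g, hiso, ?_⟩
  rw [hginv, conj_Nmat hJ hJt g hgr X Y]
  have hXW : X * J⁻¹ * gᵀ * J = t • X' := by
    rw [hgdef, row_transform hJ hJt Z X Yz]
    exact hW
  rw [hXW, hYY, Nmat_smul X' t Y' ht hY']

end NAux

namespace NAux

lemma entry_mul_one {m : ℕ} (A : Matrix (Fin n) (Fin 1) F) (Bm : Matrix (Fin 1) (Fin m) F)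
    (i : Fin n) (k : Fin m) : (A * Bm) i k = A i 0 * Bm 0 k := by
  rw [Matrix.mul_apply, Fin.sum_univ_one]

end NAux

open NAux

/-- Lemma 3.3(ii)(iii), orthogonal case: `J` is an invertible symmetric matrix over `𝔽_q`
(`q` odd).  For admissible pairs `(X,Y)` and `(X',Y')` (nonzero `X`, nonzero `Y`, with
`X·(-J⁻¹·Xᵀ) = 2Y` and `X'·(-J⁻¹·X'ᵀ) = 2Y'`), the matrices `N(X,Y)` and `N(X',Y')` are
conjugate by an element of `G(J)` iff `Y'·Y⁻¹` is a square in `𝔽_qˣ`; in particular, the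
`G(J)`-conjugacy class of `N(X,Y)` is determined by the square class of `Y`. -/
theorem N_conj_iff_square_orthogonal
    (F : Type*) [Field F] [Fintype F] (hF : ringChar F ≠ 2)
    (n : ℕ)
    (J : Matrix (Fin n) (Fin n) F) (hJ : IsUnit J) (hJt : Jᵀ = J)
    (X X' : Matrix (Fin 1) (Fin n) F) (Y Y' : F)
    (hX : X ≠ 0) (hY : Y ≠ 0) (hX' : X' ≠ 0) (hY' : Y' ≠ 0)
    (hadm : (X * (-(J⁻¹ * Xᵀ))) 0 0 = 2 * Y)
    (hadm' : (X' * (-(J⁻¹ * X'ᵀ))) 0 0 = 2 * Y') :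
    IsGJConj J (Nmat J X Y) (Nmat J X' Y') ↔ IsSquare (Y' * Y⁻¹) := by
  have h2 : (2 : F) ≠ 0 := Ring.two_ne_zero hF
  have hd : IsUnit J.det := (Matrix.isUnit_iff_isUnit_det J).mp hJ
  have hbX : bil J X X = -(2 * Y) := by
    rw [bil, Matrix.mul_assoc]
    have h := hadm
    simp only [Matrix.mul_neg, Matrix.neg_apply] at h
    linear_combination -h
  have hbX' : bil J X' X' = -(2 * Y') := by
    rw [bil, Matrix.mul_assoc]
    have h := hadm'
    simp only [Matrix.mul_neg, Matrix.neg_apply] at h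
    linear_combination -h
  constructor
  · rintro ⟨g, hg, hconj⟩
    have hdetg : IsUnit g.det := by
      have h := congrArg Matrix.det hg
      rw [Matrix.det_mul, Matrix.det_mul, Matrix.det_transpose] at h
      rw [isUnit_iff_ne_zero]
      intro h0
      rw [h0, mul_zero] at h
      exact hd.ne_zero h.symm
    have hgi : g⁻¹ * g = 1 := Matrix.nonsing_inv_mul g hdetg
    have hkey : g * Nmat J X Y = Nmat J X' Y' * g := by
      calc g * Nmat J X Y = g * Nmat J X Y * (g⁻¹ * g) := by rw [hgi, Matrix.mul_one]
        _ = (g * Nmat J X Y * g⁻¹) * g := by simp only [Matrix.mul_assoc]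
        _ = Nmat J X' Y' * g := by rw [hconj]
    have hkey2 : Y⁻¹ • ((g * (J⁻¹ * Xᵀ)) * X) = Y'⁻¹ • ((J⁻¹ * X'ᵀ) * (X' * g)) := by
      have h := hkey
      rw [Nmat, Nmat] at h
      rw [Matrix.mul_add, Matrix.add_mul, Matrix.mul_one, Matrix.one_mul,
        Matrix.mul_smul, Matrix.smul_mul] at h
      have h' := add_left_cancel h
      calc Y⁻¹ • ((g * (J⁻¹ * Xᵀ)) * X) = Y⁻¹ • (g * (J⁻¹ * Xᵀ * X)) := by
            simp only [Matrix.mul_assoc]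
        _ = Y'⁻¹ • (J⁻¹ * X'ᵀ * X' * g) := h'
        _ = Y'⁻¹ • ((J⁻¹ * X'ᵀ) * (X' * g)) := by simp only [Matrix.mul_assoc]
    obtain ⟨j, hj⟩ : ∃ j, X 0 j ≠ 0 := by
      by_contra hc
      push_neg at hc
      apply hX
      ext i k
      have hi : i = 0 := Subsingleton.elim i 0
      rw [hi]
      simpa using hc k
    obtain ⟨lam, hlam⟩ : ∃ l : F, l = Y * Y'⁻¹ * ((X' * g) 0 j * (X 0 j)⁻¹) := ⟨_, rfl⟩
    have hcd : g * (J⁻¹ * Xᵀ) = lam • (J⁻¹ * X'ᵀ) := by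
      ext i k
      have hk : k = 0 := Subsingleton.elim k 0
      rw [hk, Matrix.smul_apply, smul_eq_mul]
      have h := congrFun (congrFun hkey2 i) j
      rw [Matrix.smul_apply, Matrix.smul_apply, smul_eq_mul, smul_eq_mul,
        entry_mul_one, entry_mul_one] at h
      have hA : (g * (J⁻¹ * Xᵀ)) i 0 * X 0 j
          = Y * (Y'⁻¹ * ((J⁻¹ * X'ᵀ) i 0 * (X' * g) 0 j)) := by
        rw [← h]
        field_simp
      apply mul_right_cancel₀ hj
      rw [hA, hlam]
      field_simp
    have hn1 := norm_transform hJ hJt g hg X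
    rw [hcd] at hn1
    have hn2 : (J⁻¹ * X'ᵀ)ᵀ * J * (J⁻¹ * X'ᵀ) = bil J X' X' • 1 := by
      have h := norm_transform hJ hJt 1
        (show (1 : Matrix (Fin n) (Fin n) F)ᵀ * J * 1 = J by simp) X'
      simpa using h
    rw [Matrix.transpose_smul, Matrix.smul_mul, Matrix.smul_mul, Matrix.mul_smul,
      hn2] at hn1
    have hsc : lam * (lam * bil J X' X') = bil J X X := by
      have h := congrFun (congrFun hn1 0) 0
      simpa [Matrix.smul_apply, smul_eq_mul] using h
    rw [hbX, hbX'] at hsc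
    have hYlam : Y = lam * lam * Y' := by
      apply mul_left_cancel₀ h2
      linear_combination hsc
    have hlam0 : lam ≠ 0 := by
      intro h0
      rw [h0] at hYlam
      simp at hYlam
      exact hY hYlam
    exact ⟨lam⁻¹, by rw [hYlam]; field_simp⟩
  · rintro ⟨μ, hμ⟩
    have hμ0 : μ ≠ 0 := by
      intro h0
      rw [h0, mul_zero] at hμ
      exact (mul_ne_zero hY' (inv_ne_zero hY)) hμ
    have hYY' : Y' = μ * μ * Y := by
      field_simp [hY] at hμ
      linear_combination hμ
    have hbswap : bil J X' X = bil J X X' := bil_comm hJt X' X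
    have hexp : ∀ s : F, bil J (μ • X + s • X') (μ • X + s • X')
        = μ * μ * -(2 * Y) + 2 * μ * s * bil J X X' + s * s * -(2 * Y') := by
      intro s
      simp only [bil_add_left, bil_add_right, bil_smul_left, bil_smul_right,
        hbX, hbX', hbswap]
      ring
    have hXexp : ∀ s : F, bil J X (μ • X + s • X') = μ * -(2 * Y) + s * bil J X X' := by
      intro s
      simp only [bil_add_right, bil_smul_right, hbX]
    by_cases hS : bil J (μ • X + (-1 : F) • X') (μ • X + (-1 : F) • X') = 0
    · -- use Z = μ•X + X'
      set Z := μ • X + (1 : F) • X' with hZ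
      have h0 := hS
      rw [hexp (-1)] at h0
      have hZZ : bil J Z Z = -(8 * Y') := by
        rw [hZ, hexp 1]
        linear_combination -h0 + 4 * hYY'
      have h8 : (8 : F) ≠ 0 := by
        have h8e : (8 : F) = 2 * 2 * 2 := by norm_num
        rw [h8e]
        exact mul_ne_zero (mul_ne_zero h2 h2) h2
      have hbZ : bil J Z Z ≠ 0 := by
        rw [hZZ]
        exact neg_ne_zero.mpr (mul_ne_zero h8 hY')
      have hb2 : 2 * (μ * bil J X Z) = bil J Z Z := by
        rw [hZZ, hZ, hXexp 1]
        linear_combination -h0 + 6 * hYY'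
      have hcoef : (-(bil J Z Z) / 2)⁻¹ * bil J X Z = -μ⁻¹ := by
        have hden : 2 * (μ * bil J X Z) ≠ 0 := by rw [hb2]; exact hbZ
        rw [← hb2]
        field_simp
        rw [div_self (right_ne_zero_of_mul (right_ne_zero_of_mul hden))]
      have hW : X + ((-(bil J Z Z) / 2)⁻¹ * bil J X Z) • Z = (-μ⁻¹) • X' := by
        rw [hcoef, hZ, smul_add, smul_smul, smul_smul]
        have e1 : -μ⁻¹ * μ = -1 := by field_simp
        have e2 : -μ⁻¹ * (1 : F) = -μ⁻¹ := by ring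
        rw [e1, e2]
        module
      exact conj_of_reflection hJ hJt h2 X X' Z Y Y' (-μ⁻¹)
        (neg_ne_zero.mpr (inv_ne_zero hμ0)) hY' hbZ
        (by rw [hYY']; field_simp) hW
    · -- use Z = μ•X - X'
      set Z := μ • X + (-1 : F) • X' with hZ
      have hbZ : bil J Z Z ≠ 0 := hS
      have hb2 : 2 * (μ * bil J X Z) = bil J Z Z := by
        rw [hZ, hXexp (-1), hexp (-1)]
        linear_combination 2 * hYY'
      have hcoef : (-(bil J Z Z) / 2)⁻¹ * bil J X Z = -μ⁻¹ := by
        have hden : 2 * (μ * bil J X Z) ≠ 0 := by rw [hb2]; exact hbZ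
        rw [← hb2]
        field_simp
        rw [div_self (right_ne_zero_of_mul (right_ne_zero_of_mul hden))]
      have hW : X + ((-(bil J Z Z) / 2)⁻¹ * bil J X Z) • Z = μ⁻¹ • X' := by
        rw [hcoef, hZ, smul_add, smul_smul, smul_smul]
        have e1 : -μ⁻¹ * μ = -1 := by field_simp
        have e2 : -μ⁻¹ * (-1 : F) = μ⁻¹ := by ring
        rw [e1, e2]
        module
      exact conj_of_reflection hJ hJt h2 X X' Z Y Y' μ⁻¹
        (inv_ne_zero hμ0) hY' hbZ
        (by rw [hYY']; field_simp) hW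
end

section
/- Let h ∈ GL(n, 𝔽_q) and λ ∈ 𝔽_qˣ satisfy hᵀ·J·h = λ·J (so h is a similitude of the form J with factor λ), and suppose λ is NOT a square in 𝔽_qˣ. Then for every admissible pair (X, Y), the matrix h·N(X, Y)·h⁻¹ belongs to G(J) but is not conjugate to N(X, Y) by any element of G(J). (Lemma 3.3(iv): conjugation by a similitude with nonsquare factor exchanges the two conjugacy classes C_□ and C_⊄.) -/
open Matrix

variable {F : Type*} [Field F] {n : ℕ}

lemma fin1_expand {m k : Type*} [Fintype m] (A : Matrix m (Fin 1) F)
    (S : Matrix (Fin 1) (Fin 1) F) (B : Matrix (Fin 1) k F) :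
    A * S * B = S 0 0 • (A * B) := by
  ext i j
  simp [Matrix.mul_apply, Fin.sum_univ_one]
  ring

lemma Nmat_isometry (ε : F) (hε2 : ε * ε = 1)
    (J : Matrix (Fin n) (Fin n) F) (hJ : IsUnit J) (hJt : Jᵀ = ε • J)
    (X : Matrix (Fin 1) (Fin n) F) (Y : F) (hY : Y ≠ 0)
    (hadm : (X * J⁻¹ * Xᵀ) 0 0 = -((1 + ε) * Y)) :
    (Nmat J X Y)ᵀ * J * (Nmat J X Y) = J := by
  have hdet : IsUnit J.det := (Matrix.isUnit_iff_isUnit_det J).mp hJ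
  have hJJ : J * J⁻¹ = 1 := Matrix.mul_nonsing_inv J hdet
  have hJJ' : J⁻¹ * J = 1 := Matrix.nonsing_inv_mul J hdet
  have hJtinv : (Jᵀ)⁻¹ = ε • J⁻¹ := by
    apply Matrix.inv_eq_right_inv
    rw [hJt, Matrix.smul_mul, Matrix.mul_smul, smul_smul, hε2, hJJ, one_smul]
  have hPt : (J⁻¹ * Xᵀ * X)ᵀ = ε • (Xᵀ * X * J⁻¹) := by
    rw [Matrix.transpose_mul, Matrix.transpose_mul, Matrix.transpose_transpose,
      Matrix.transpose_nonsing_inv, hJtinv]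
    simp only [Matrix.mul_smul, Matrix.mul_assoc]
  rw [Nmat, transpose_add, transpose_one, transpose_smul, hPt, smul_smul]
  have e1 : Xᵀ * X * J⁻¹ * J = Xᵀ * X := by
    rw [Matrix.mul_assoc, hJJ', Matrix.mul_one]
  have e2 : J * (J⁻¹ * Xᵀ * X) = Xᵀ * X := by
    rw [← Matrix.mul_assoc, ← Matrix.mul_assoc, hJJ, Matrix.one_mul]
  have e3 : Xᵀ * X * (J⁻¹ * Xᵀ * X) = (-((1 + ε) * Y)) • (Xᵀ * X) := by
    rw [← hadm, ← fin1_expand]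
    simp only [Matrix.mul_assoc]
  simp only [Matrix.add_mul, Matrix.mul_add, Matrix.one_mul, Matrix.mul_one,
    Matrix.smul_mul, Matrix.mul_smul, smul_smul, e1, e2, e3]
  have hc : Y⁻¹ * ε + (Y⁻¹ + Y⁻¹ * (Y⁻¹ * ε * -((1 + ε) * Y))) = 0 := by
    linear_combination (-Y⁻¹) * hε2 + (-(Y⁻¹ * (ε + ε * ε))) * (inv_mul_cancel₀ hY)
  rw [smul_add, smul_smul, ← add_assoc, add_assoc, add_assoc, ← add_smul, ← add_smul,
    hc, zero_smul, add_zero]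

/-- Lemma 3.3(iv): if `h ∈ GL(n,𝔽_q)` is a similitude of `J` with factor `λ` (that is,
`hᵀ·J·h = λ·J`) and `λ` is not a square, then for every admissible pair `(X,Y)` the
matrix `h·N(X,Y)·h⁻¹` lies in `G(J)` but is not `G(J)`-conjugate to `N(X,Y)`:
conjugation by `h` exchanges the two classes `C_□` and `C_⊄`. -/
theorem similitude_exchanges_classes
    (F : Type*) [Field F] [Fintype F] (hF : ringChar F ≠ 2)
    (n : ℕ) (ε : F) (hε : ε = 1 ∨ ε = -1)
    (J : Matrix (Fin n) (Fin n) F) (hJ : IsUnit J) (hJt : Jᵀ = ε • J)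
    (h : Matrix (Fin n) (Fin n) F) (hh : IsUnit h)
    (l : F) (hl : l ≠ 0) (hsim : hᵀ * J * h = l • J) (hns : ¬ IsSquare l)
    (X : Matrix (Fin 1) (Fin n) F) (hX : X ≠ 0) (Y : F) (hY : Y ≠ 0)
    (hadm : (X * (-(J⁻¹ * Xᵀ))) 0 0 = (1 + ε) * Y) :
    (h * Nmat J X Y * h⁻¹)ᵀ * J * (h * Nmat J X Y * h⁻¹) = J ∧
      ¬ IsGJConj J (Nmat J X Y) (h * Nmat J X Y * h⁻¹) := by
  have hε2 : ε * ε = 1 := by rcases hε with h1 | h1 <;> rw [h1] <;> ring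
  have hadm' : (X * J⁻¹ * Xᵀ) 0 0 = -((1 + ε) * Y) := by
    have e : X * -(J⁻¹ * Xᵀ) = -(X * J⁻¹ * Xᵀ) := by
      rw [Matrix.mul_neg, Matrix.mul_assoc]
    rw [e, Matrix.neg_apply] at hadm
    linear_combination -hadm
  have hdetJ : IsUnit J.det := (Matrix.isUnit_iff_isUnit_det J).mp hJ
  have hdeth : IsUnit h.det := (Matrix.isUnit_iff_isUnit_det h).mp hh
  have hhT : IsUnit hᵀ.det := by rwa [Matrix.det_transpose]
  have hNI : (Nmat J X Y)ᵀ * J * (Nmat J X Y) = J :=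
    Nmat_isometry ε hε2 J hJ hJt X Y hY hadm'
  have hhinv' : h * h⁻¹ = 1 := Matrix.mul_nonsing_inv h hdeth
  have hhinv : h⁻¹ * h = 1 := Matrix.nonsing_inv_mul h hdeth
  have hhJ : h * J⁻¹ = l • (J⁻¹ * (hᵀ)⁻¹) := by
    have h1 : J * h = l • ((hᵀ)⁻¹ * J) := by
      have h2 := congrArg (fun M => (hᵀ)⁻¹ * M) hsim
      simp only [Matrix.mul_smul, ← Matrix.mul_assoc] at h2
      rwa [Matrix.nonsing_inv_mul _ hhT, Matrix.one_mul] at h2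
    have h3 := congrArg (fun M => J⁻¹ * M * J⁻¹) h1
    simp only [Matrix.smul_mul, Matrix.mul_smul, ← Matrix.mul_assoc] at h3
    rw [Matrix.nonsing_inv_mul J hdetJ, Matrix.one_mul] at h3
    rw [Matrix.mul_assoc, Matrix.mul_nonsing_inv J hdetJ, Matrix.mul_one] at h3
    exact h3
  constructor
  · calc (h * Nmat J X Y * h⁻¹)ᵀ * J * (h * Nmat J X Y * h⁻¹)
        = (h⁻¹)ᵀ * ((Nmat J X Y)ᵀ * (hᵀ * J * h) * (Nmat J X Y)) * h⁻¹ := by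
          simp only [Matrix.transpose_mul, Matrix.mul_assoc]
      _ = (h⁻¹)ᵀ * ((Nmat J X Y)ᵀ * (l • J) * (Nmat J X Y)) * h⁻¹ := by rw [hsim]
      _ = l • ((h⁻¹)ᵀ * ((Nmat J X Y)ᵀ * J * (Nmat J X Y)) * h⁻¹) := by
          simp only [Matrix.smul_mul, Matrix.mul_smul]
      _ = l • ((h⁻¹)ᵀ * J * h⁻¹) := by rw [hNI]
      _ = (h⁻¹)ᵀ * ((hᵀ * J * h) * h⁻¹) := by
          rw [hsim]
          simp only [Matrix.smul_mul, Matrix.mul_smul, Matrix.mul_assoc]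
      _ = (h * h⁻¹)ᵀ * J * (h * h⁻¹) := by
          simp only [Matrix.transpose_mul, Matrix.mul_assoc]
      _ = J := by rw [hhinv', transpose_one, Matrix.one_mul, Matrix.mul_one]
  · rintro ⟨g, hg, hconj⟩
    have hdetg : IsUnit g.det := by
      have hd := congrArg Matrix.det hg
      rw [Matrix.det_mul, Matrix.det_mul, Matrix.det_transpose] at hd
      rw [isUnit_iff_ne_zero]
      intro h0
      rw [h0] at hd
      simp at hd
      exact hdetJ.ne_zero hd.symm
    have hgT : IsUnit gᵀ.det := by rwa [Matrix.det_transpose]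
    have hginv : g⁻¹ * g = 1 := Matrix.nonsing_inv_mul g hdetg
    have hginv' : g * g⁻¹ = 1 := Matrix.mul_nonsing_inv g hdetg
    have hgJ : g * J⁻¹ = J⁻¹ * (gᵀ)⁻¹ := by
      have h1 : J * g = (gᵀ)⁻¹ * J := by
        have h2 := congrArg (fun M => (gᵀ)⁻¹ * M) hg
        simp only [← Matrix.mul_assoc] at h2
        rwa [Matrix.nonsing_inv_mul _ hgT, Matrix.one_mul] at h2
      have h3 := congrArg (fun M => J⁻¹ * M * J⁻¹) h1
      simp only [← Matrix.mul_assoc] at h3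
      rw [Matrix.nonsing_inv_mul J hdetJ, Matrix.one_mul] at h3
      rw [Matrix.mul_assoc, Matrix.mul_nonsing_inv J hdetJ, Matrix.mul_one] at h3
      exact h3
    have core_g : g * (J⁻¹ * Xᵀ * X) * g⁻¹
        = J⁻¹ * (X * g⁻¹)ᵀ * (X * g⁻¹) := by
      rw [Matrix.transpose_mul, Matrix.transpose_nonsing_inv]
      calc g * (J⁻¹ * Xᵀ * X) * g⁻¹
          = (g * J⁻¹) * (Xᵀ * (X * g⁻¹)) := by simp only [Matrix.mul_assoc]
        _ = (J⁻¹ * (gᵀ)⁻¹) * (Xᵀ * (X * g⁻¹)) := by rw [hgJ]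
        _ = J⁻¹ * ((gᵀ)⁻¹ * Xᵀ) * (X * g⁻¹) := by simp only [Matrix.mul_assoc]
    have core_h : h * (J⁻¹ * Xᵀ * X) * h⁻¹
        = l • (J⁻¹ * (X * h⁻¹)ᵀ * (X * h⁻¹)) := by
      rw [Matrix.transpose_mul, Matrix.transpose_nonsing_inv]
      calc h * (J⁻¹ * Xᵀ * X) * h⁻¹
          = (h * J⁻¹) * (Xᵀ * (X * h⁻¹)) := by simp only [Matrix.mul_assoc]
        _ = (l • (J⁻¹ * (hᵀ)⁻¹)) * (Xᵀ * (X * h⁻¹)) := by rw [hhJ]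
        _ = l • (J⁻¹ * ((hᵀ)⁻¹ * Xᵀ) * (X * h⁻¹)) := by
            rw [Matrix.smul_mul]
            simp only [Matrix.mul_assoc]
    have expg : g * Nmat J X Y * g⁻¹
        = 1 + Y⁻¹ • (J⁻¹ * (X * g⁻¹)ᵀ * (X * g⁻¹)) := by
      rw [Nmat, Matrix.mul_add, Matrix.mul_one, Matrix.add_mul, hginv',
        Matrix.mul_smul, Matrix.smul_mul, core_g]
    have exph : h * Nmat J X Y * h⁻¹
        = 1 + (Y⁻¹ * l) • (J⁻¹ * (X * h⁻¹)ᵀ * (X * h⁻¹)) := by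
      rw [Nmat, Matrix.mul_add, Matrix.mul_one, Matrix.add_mul, hhinv',
        Matrix.mul_smul, Matrix.smul_mul, core_h, smul_smul]
    rw [expg, exph] at hconj
    have hAB := add_left_cancel hconj
    have Jcancel : ∀ A : Matrix (Fin 1) (Fin n) F,
        J * (J⁻¹ * Aᵀ * A) = Aᵀ * A := by
      intro A
      rw [← Matrix.mul_assoc, ← Matrix.mul_assoc,
        Matrix.mul_nonsing_inv J hdetJ, Matrix.one_mul]
    have hYl : Y * (Y⁻¹ * l) = l := by
      rw [← mul_assoc, mul_inv_cancel₀ hY, one_mul]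
    have hE := congrArg (fun M => Y • (J * M)) hAB
    simp only [Matrix.mul_smul, smul_smul] at hE
    rw [mul_inv_cancel₀ hY, hYl, one_smul, Jcancel, Jcancel] at hE
    -- hE : (X * g⁻¹)ᵀ * (X * g⁻¹) = l • ((X * h⁻¹)ᵀ * (X * h⁻¹))
    have hune : X * g⁻¹ ≠ 0 := by
      intro h0
      apply hX
      have hXg : X * g⁻¹ * g = X := by
        rw [Matrix.mul_assoc, hginv, Matrix.mul_one]
      rw [← hXg, h0, Matrix.zero_mul]
    obtain ⟨i, hi⟩ : ∃ i, (X * g⁻¹) 0 i ≠ 0 := by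
      by_contra hcon
      push_neg at hcon
      apply hune
      ext a b
      rw [Subsingleton.elim a 0]
      simpa using hcon b
    have entry : ∀ (A : Matrix (Fin 1) (Fin n) F) (i j : Fin n),
        (Aᵀ * A) i j = A 0 i * A 0 j := by
      intro A i j
      simp [Matrix.mul_apply, Fin.sum_univ_one]
    have hEi := congrFun (congrFun hE i) i
    rw [entry, Matrix.smul_apply, entry, smul_eq_mul] at hEi
    -- hEi : (X * g⁻¹) 0 i * (X * g⁻¹) 0 i = l * ((X * h⁻¹) 0 i * (X * h⁻¹) 0 i)
    have hvne : (X * h⁻¹) 0 i ≠ 0 := by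
      intro h0
      rw [h0] at hEi
      simp only [mul_zero] at hEi
      exact hi (mul_self_eq_zero.mp hEi)
    apply hns
    refine ⟨(X * g⁻¹) 0 i / (X * h⁻¹) 0 i, ?_⟩
    rw [div_mul_div_comm, eq_div_iff (mul_ne_zero hvne hvne)]
    linear_combination -hEi
end

section
/- Let h ∈ GL(n, 𝔽_q) and λ ∈ 𝔽_qˣ satisfy hᵀ·J·h = λ·J. Then for every admissible pair (X, Y), the pair (X·h⁻¹, λ⁻¹·Y) is again admissible, and h·N(X, Y)·h⁻¹ = N(X·h⁻¹, λ⁻¹·Y). (Equivariance of the map N under the similitude group, used in the proof of Lemma 3.3.) -/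
open Matrix

variable {F : Type*} [Field F] {n : ℕ}

/-- Equivariance of the map `N` under the similitude group (used in the proof of
Lemma 3.3): if `hᵀ·J·h = λ·J` with `h ∈ GL(n,𝔽_q)` and `λ ∈ 𝔽_qˣ`, then for every
admissible pair `(X,Y)` the pair `(X·h⁻¹, λ⁻¹·Y)` is again admissible and
`h·N(X,Y)·h⁻¹ = N(X·h⁻¹, λ⁻¹·Y)`. -/
theorem N_similitude_equivariance
    (F : Type*) [Field F] [Fintype F] (hF : ringChar F ≠ 2)
    (n : ℕ) (ε : F) (hε : ε = 1 ∨ ε = -1)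
    (J : Matrix (Fin n) (Fin n) F) (hJ : IsUnit J) (hJt : Jᵀ = ε • J)
    (h : Matrix (Fin n) (Fin n) F) (hh : IsUnit h)
    (l : F) (hl : l ≠ 0) (hsim : hᵀ * J * h = l • J)
    (X : Matrix (Fin 1) (Fin n) F) (hX : X ≠ 0) (Y : F) (hY : Y ≠ 0)
    (hadm : (X * (-(J⁻¹ * Xᵀ))) 0 0 = (1 + ε) * Y) :
    (X * h⁻¹ ≠ 0 ∧ l⁻¹ * Y ≠ 0 ∧
        ((X * h⁻¹) * (-(J⁻¹ * (X * h⁻¹)ᵀ))) 0 0 = (1 + ε) * (l⁻¹ * Y)) ∧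
      h * Nmat J X Y * h⁻¹ = Nmat J (X * h⁻¹) (l⁻¹ * Y) := by
  have hdet : IsUnit h.det := (Matrix.isUnit_iff_isUnit_det h).mp hh
  have hJdet : IsUnit J.det := (Matrix.isUnit_iff_isUnit_det J).mp hJ
  have hhi : h * h⁻¹ = 1 := Matrix.mul_nonsing_inv h hdet
  have hih : h⁻¹ * h = 1 := Matrix.nonsing_inv_mul h hdet
  have hJi : J * J⁻¹ = 1 := Matrix.mul_nonsing_inv J hJdet
  have hiJ : J⁻¹ * J = 1 := Matrix.nonsing_inv_mul J hJdet
  have hTdet : IsUnit hᵀ.det := by rwa [Matrix.det_transpose]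
  have hTiT : hᵀ⁻¹ * hᵀ = 1 := Matrix.nonsing_inv_mul _ hTdet
  -- step 1 : J * h = l • (hᵀ⁻¹ * J)
  have s1 : J * h = l • (hᵀ⁻¹ * J) := by
    have := congrArg (fun M => hᵀ⁻¹ * M) hsim
    simp only [Matrix.mul_smul] at this
    rwa [mul_assoc hᵀ J h, ← mul_assoc hᵀ⁻¹ hᵀ, hTiT, one_mul] at this
  -- step 2 : h = l • (J⁻¹ * (hᵀ⁻¹ * J))
  have s2 : h = l • (J⁻¹ * (hᵀ⁻¹ * J)) := by
    have := congrArg (fun M => J⁻¹ * M) s1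
    simp only [Matrix.mul_smul] at this
    rwa [← mul_assoc J⁻¹ J h, hiJ, one_mul] at this
  -- key : h * J⁻¹ = l • (J⁻¹ * hᵀ⁻¹)
  have key : h * J⁻¹ = l • (J⁻¹ * hᵀ⁻¹) := by
    have := congrArg (fun M => M * J⁻¹) s2
    simp only [Matrix.smul_mul] at this
    rwa [mul_assoc J⁻¹ (hᵀ⁻¹ * J) J⁻¹, mul_assoc hᵀ⁻¹ J J⁻¹, hJi, mul_one] at this
  have key2 : J⁻¹ * hᵀ⁻¹ = l⁻¹ • (h * J⁻¹) := by
    rw [key, smul_smul, inv_mul_cancel₀ hl, one_smul]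
  have htr : (h⁻¹)ᵀ = hᵀ⁻¹ := Matrix.transpose_nonsing_inv h
  -- admissibility matrix identity
  have madm : (X * h⁻¹) * (-(J⁻¹ * (X * h⁻¹)ᵀ)) = l⁻¹ • (X * (-(J⁻¹ * Xᵀ))) := by
    rw [Matrix.transpose_mul, htr, ← Matrix.mul_assoc J⁻¹ hᵀ⁻¹ Xᵀ, key2]
    simp only [Matrix.smul_mul, Matrix.mul_smul, Matrix.mul_neg, smul_neg, neg_inj]
    congr 1
    simp only [Matrix.mul_assoc]
    rw [← Matrix.mul_assoc h⁻¹ h (J⁻¹ * Xᵀ), hih, Matrix.one_mul]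
  have hXh : X * h⁻¹ ≠ 0 := by
    intro h0
    apply hX
    have h1 := congrArg (fun M => M * h) h0
    simpa [Matrix.mul_assoc, hih] using h1
  refine ⟨⟨hXh, by simp [hl, hY], ?_⟩, ?_⟩
  · rw [madm, Matrix.smul_apply, hadm, smul_eq_mul]; ring
  · unfold Nmat
    rw [mul_add, add_mul, mul_one, hhi]
    congr 1
    rw [Matrix.transpose_mul, htr, ← Matrix.mul_assoc J⁻¹ hᵀ⁻¹ Xᵀ, key2,
      mul_inv, inv_inv]
    simp only [Matrix.mul_smul, Matrix.smul_mul, smul_smul]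
    have hs : l * Y⁻¹ * l⁻¹ = Y⁻¹ := by field_simp
    rw [hs]
    congr 1
    simp only [Matrix.mul_assoc]
end
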